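/- Entropy lower bound for weak limits of measures (Deift–Killip type lemma): Let Ω ⊆ ℝ be open, let w : Ω → [0,∞) be locally Lebesgue-integrable and Lebesgue-almost everywhere positive on Ω, let (μ_n) be finite positive Borel measures on ℝ converging weakly to a finite positive Borel measure μ (meaning ∫f dμ_n → ∫f dμ for every bounded continuous f : ℝ → ℝ), and let K ⊆ Ω be compact with positive Lebesgue measure. Set w(K) := ∫_K w(λ) dλ > 0 and let dμ_n/dλ denote the Radon–Nikodym derivative of μ_n with respect to Lebesgue measure (defined Lebesgue-a.e. via the Lebesgue decomposition). Then, with values in the extended reals, liminf_{n→∞} (1/w(K)) ∫_K −log( (dμ_n/dλ)(λ) / w(λ) ) · w(λ) dλ ≥ log( w(K) / μ(K) ), where the right-hand side is interpreted as +∞ when μ(K) = 0. -/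

import Mathlib

open MeasureTheory Filter
open scoped ENNReal

noncomputable section

/-- The nonnegative (upper) part of an extended real, as an extended
nonnegative real. -/
def erealPos (x : EReal) : ℝ≥0∞ :=
  if x = ⊤ then ⊤ else ENNReal.ofReal x.toReal

/-- The integral of an extended-real-valued function, in the extended sense:
the (lower) integral of its positive part minus the (lower) integral of its
negative part. -/
def extIntegral (f : ℝ → EReal) (μ : Measure ℝ) : EReal :=
  ((∫⁻ x, erealPos (f x) ∂μ : ℝ≥0∞) : EReal) - ((∫⁻ x, erealPos (-(f x)) ∂μ : ℝ≥0∞) : EReal)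

/-- The entropy-type integrand `−log((dμ/dλ)(l)/w(l))·w(l)`, with values in
the extended reals (`log 0 = −∞`, `log ∞ = +∞`). -/
def entropyIntegrand (d : ℝ → ℝ≥0∞) (w : ℝ → ℝ) (l : ℝ) : EReal :=
  (-(ENNReal.log (d l / ENNReal.ofReal (w l)))) * ((w l : ℝ) : EReal)

lemma erealPos_mono : Monotone erealPos := by
  intro x y h
  unfold erealPos
  split_ifs with hx hy hy
  · exact le_rfl
  · exact absurd (top_le_iff.mp (hx ▸ h)) hy
  · exact le_top
  · rcases eq_or_ne x ⊥ with rfl | hxb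
    · simp [EReal.toReal_bot]
    · exact ENNReal.ofReal_le_ofReal (EReal.toReal_le_toReal h hxb hy)

lemma erealPos_coe (x : ℝ) : erealPos (x : EReal) = ENNReal.ofReal x := by
  simp [erealPos, EReal.coe_ne_top]

lemma extIntegral_mono_ae {f g : ℝ → EReal} {μ : Measure ℝ} (h : f ≤ᵐ[μ] g) :
    extIntegral f μ ≤ extIntegral g μ := by
  refine EReal.sub_le_sub ?_ ?_
  · exact_mod_cast lintegral_mono_ae (h.mono fun x hx => erealPos_mono hx)
  · exact_mod_cast lintegral_mono_ae
      (h.mono fun x hx => erealPos_mono (EReal.neg_le_neg_iff.mpr hx))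

lemma extIntegral_coe_eq {h : ℝ → ℝ} {μ : Measure ℝ} (hi : Integrable h μ) :
    extIntegral (fun x => ((h x : ℝ) : EReal)) μ = ((∫ x, h x ∂μ : ℝ) : EReal) := by
  have key : ∀ g : ℝ → ℝ, Integrable g μ → (∫⁻ x, ENNReal.ofReal (g x) ∂μ) ≠ ⊤ := by
    intro g hg
    refine ne_of_lt (lt_of_le_of_lt ?_ hg.2)
    refine lintegral_mono fun x => ?_
    rw [← ofReal_norm]
    exact ENNReal.ofReal_le_ofReal (le_abs_self _)
  have h1 : (∫⁻ x, erealPos ((h x : ℝ) : EReal) ∂μ) = ∫⁻ x, ENNReal.ofReal (h x) ∂μ := by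
    simp_rw [erealPos_coe]
  have h2 : (∫⁻ x, erealPos (-((h x : ℝ) : EReal)) ∂μ) = ∫⁻ x, ENNReal.ofReal (-h x) ∂μ := by
    simp_rw [← EReal.coe_neg, erealPos_coe]
  rw [extIntegral, h1, h2,
    integral_eq_lintegral_pos_part_sub_lintegral_neg_part hi]
  have e1 := key h hi
  have e2 := key (-h) hi.neg
  simp only [Pi.neg_apply] at e2
  rw [EReal.coe_sub]
  congr 1
  · rw [← ENNReal.ofReal_toReal e1, EReal.coe_ennreal_ofReal,
      max_eq_left ENNReal.toReal_nonneg, ENNReal.toReal_ofReal ENNReal.toReal_nonneg]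
  · rw [← ENNReal.ofReal_toReal e2, EReal.coe_ennreal_ofReal,
      max_eq_left ENNReal.toReal_nonneg, ENNReal.toReal_ofReal ENNReal.toReal_nonneg]

/-- The pointwise tangent-line inequality for the entropy integrand. -/
lemma pointwise_bound {dl : ℝ≥0∞} {wl c : ℝ} (hw : 0 < wl) (hc : 0 < c) (hd : dl < ⊤) :
    (((1 - Real.log c) * wl - dl.toReal / c : ℝ) : EReal)
      ≤ (-(ENNReal.log (dl / ENNReal.ofReal wl))) * ((wl : ℝ) : EReal) := by
  set t := dl.toReal with ht
  have hdl : dl = ENNReal.ofReal t := (ENNReal.ofReal_toReal hd.ne).symm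
  rw [hdl, ← ENNReal.ofReal_div_of_pos hw]
  rcases eq_or_lt_of_le (ENNReal.toReal_nonneg : 0 ≤ t) with h0 | h0
  · -- t = 0 : integrand is ⊤
    have ht0 : t = 0 := ht.trans h0.symm
    rw [ht0]
    have : ENNReal.log (ENNReal.ofReal (0 / wl)) = ⊥ := by
      simp [ENNReal.log_ofReal]
    rw [this]
    simp only [EReal.neg_bot]
    rw [EReal.top_mul_coe_of_pos hw]
    exact le_top
  · -- t > 0 : real inequality
    rw [ENNReal.log_ofReal_of_pos (div_pos h0 hw), ← EReal.coe_neg, ← EReal.coe_mul,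
      EReal.coe_le_coe_iff]
    have key := Real.log_le_sub_one_of_pos (show 0 < t / (c * wl) by positivity)
    have hlog : Real.log (t / (c * wl)) = Real.log (t / wl) - Real.log c := by
      rw [show t / (c * wl) = t / wl / c by ring, Real.log_div (by positivity) hc.ne']
    rw [hlog] at key
    have key2 : (Real.log (t / wl) - Real.log c) * wl ≤ (t / (c * wl) - 1) * wl :=
      mul_le_mul_of_nonneg_right key hw.le
    have : (t / (c * wl)) * wl = t / c := by
      field_simp
    have h3 : (t / (c * wl)) * wl = t / c := this
    nlinarith [key2, h3]

lemma key_bound (μn : Measure ℝ) [IsFiniteMeasure μn] {K : Set ℝ}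
    (w : ℝ → ℝ) (hw : IntegrableOn w K volume)
    (hwpos : ∀ᵐ x ∂(volume.restrict K), 0 < w x)
    {c : ℝ} (hc : 0 < c) :
    (((1 - Real.log c) * (∫ x in K, w x) - (μn K).toReal / c : ℝ) : EReal)
      ≤ extIntegral (entropyIntegrand (μn.rnDeriv volume) w) (volume.restrict K) := by
  set d := μn.rnDeriv volume with hd_def
  have hd : Measurable d := Measure.measurable_rnDeriv _ _
  have hdfin : ∀ᵐ x ∂(volume.restrict K), d x < ⊤ :=
    (Measure.rnDeriv_lt_top μn volume).filter_mono (ae_mono Measure.restrict_le_self)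
  have hlint : (∫⁻ x in K, d x) ≠ ⊤ :=
    ((Measure.setLIntegral_rnDeriv_le K).trans_lt (measure_lt_top μn K)).ne
  set h : ℝ → ℝ := fun l => (1 - Real.log c) * w l - (d l).toReal / c with hh
  have hint : Integrable h (volume.restrict K) := by
    refine Integrable.sub (hw.const_mul _) ?_
    exact (integrable_toReal_of_lintegral_ne_top hd.aemeasurable hlint).div_const c
  have hptwise : (fun l => ((h l : ℝ) : EReal)) ≤ᵐ[volume.restrict K]
      entropyIntegrand d w := by
    filter_upwards [hwpos, hdfin] with l hwl hdl
    exact pointwise_bound hwl hc hdl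
  refine le_trans ?_ ((extIntegral_coe_eq hint).symm ▸ extIntegral_mono_ae hptwise)
  rw [EReal.coe_le_coe_iff]
  have hIsub : ∫ l in K, h l = (1 - Real.log c) * (∫ x in K, w x)
      - (∫ l in K, (d l).toReal) / c := by
    rw [hh]
    rw [integral_sub (hw.const_mul _)
      ((integrable_toReal_of_lintegral_ne_top hd.aemeasurable hlint).div_const c),
      MeasureTheory.integral_const_mul, integral_div]
  rw [hIsub]
  have : ∫ l in K, (d l).toReal = (∫⁻ l in K, d l).toReal :=
    integral_toReal hd.aemeasurable hdfin
  rw [this]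
  have hle : (∫⁻ l in K, d l).toReal ≤ (μn K).toReal :=
    ENNReal.toReal_mono (measure_ne_top μn K) (Measure.setLIntegral_rnDeriv_le K)
  gcongr

lemma ereal_le_of_forall_sub_le {b : ℝ} {L : EReal}
    (h : ∀ δ : ℝ, 0 < δ → ((b - δ : ℝ) : EReal) ≤ L) : (b : EReal) ≤ L := by
  by_contra hlt
  push_neg at hlt
  obtain ⟨z, hz1, hz2⟩ := EReal.exists_between_coe_real hlt
  have hδ : (0 : ℝ) < b - z := sub_pos.mpr (EReal.coe_lt_coe_iff.mp hz2)
  have := h (b - z) hδ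
  rw [show b - (b - z) = z by ring] at this
  exact absurd (lt_of_lt_of_le hz1 this) (lt_irrefl _)

/-- Entropy lower bound for weak limits of measures (Deift–Killip type
lemma). -/
theorem entropy_lower_bound_weak_limit {Ω : Set ℝ} (hΩ : IsOpen Ω)
    (w : ℝ → ℝ) (hw0 : ∀ x ∈ Ω, 0 ≤ w x)
    (hwloc : LocallyIntegrableOn w Ω)
    (hwpos : ∀ᵐ x ∂(volume.restrict Ω), 0 < w x)
    (μ : ℕ → Measure ℝ) (ν : Measure ℝ)
    [∀ n, IsFiniteMeasure (μ n)] [IsFiniteMeasure ν]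
    (hweak : ∀ f : BoundedContinuousFunction ℝ ℝ,
      Tendsto (fun n => ∫ x, f x ∂(μ n)) atTop (nhds (∫ x, f x ∂ν)))
    (K : Set ℝ) (hK : IsCompact K) (hKΩ : K ⊆ Ω) (hKpos : 0 < volume K) :
    atTop.liminf (fun n =>
        (((∫ x in K, w x)⁻¹ : ℝ) : EReal) *
          extIntegral (entropyIntegrand ((μ n).rnDeriv volume) w) (volume.restrict K))
      ≥ ENNReal.log (ENNReal.ofReal (∫ x in K, w x) / ν K) := by
  -- basic facts about w on K
  have hwK : ∀ᵐ x ∂(volume.restrict K), 0 < w x :=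
    hwpos.filter_mono (ae_mono (Measure.restrict_mono hKΩ le_rfl))
  have wInt : IntegrableOn w K volume := hwloc.integrableOn_compact_subset hKΩ hK
  set W : ℝ := ∫ x in K, w x with hW_def
  have hWpos : 0 < W := by
    rw [hW_def]
    rw [setIntegral_pos_iff_support_of_nonneg_ae (hwK.mono fun x hx => hx.le) wInt]
    have hnull : volume ({x | ¬ 0 < w x} ∩ K) = 0 := by
      have h' := hwK
      rw [ae_iff, Measure.restrict_apply' hK.measurableSet] at h'
      exact h'
    have hsub : K ⊆ (Function.support w ∩ K) ∪ ({x | ¬ 0 < w x} ∩ K) := by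
      intro y hy
      by_cases h : 0 < w y
      · exact Or.inl ⟨ne_of_gt h, hy⟩
      · exact Or.inr ⟨h, hy⟩
    have hKle : volume K ≤ volume (Function.support w ∩ K) := by
      calc volume K ≤ volume (Function.support w ∩ K) + volume ({x | ¬ 0 < w x} ∩ K) :=
            (measure_mono hsub).trans (measure_union_le _ _)
        _ = volume (Function.support w ∩ K) := by rw [hnull, add_zero]
    exact lt_of_lt_of_le hKpos hKle
  set L := atTop.liminf (fun n =>
      ((W⁻¹ : ℝ) : EReal) *
        extIntegral (entropyIntegrand ((μ n).rnDeriv volume) w) (volume.restrict K)) with hL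
  -- portmanteau
  have hlimsup : atTop.limsup (fun n => μ n K) ≤ ν K := by
    let Fμ : ℕ → FiniteMeasure ℝ := fun n => ⟨μ n, inferInstance⟩
    let Fν : FiniteMeasure ℝ := ⟨ν, inferInstance⟩
    have htend : Tendsto Fμ atTop (nhds Fν) :=
      FiniteMeasure.tendsto_iff_forall_integral_tendsto.mpr (fun f => hweak f)
    exact FiniteMeasure.limsup_measure_closed_le_of_tendsto htend hK.isClosed
  -- the main estimate
  have main : ∀ c : ℝ, 0 < c → ∀ ε : ℝ, 0 < ε →
      (((1 - Real.log c - ((ν K).toReal + ε) / (c * W)) : ℝ) : EReal) ≤ L := by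
    intro c hc ε hε
    have hlt : ν K < ν K + ENNReal.ofReal ε :=
      ENNReal.lt_add_right (measure_ne_top ν K)
        (ENNReal.ofReal_pos.mpr hε).ne'
    have hev : ∀ᶠ n in atTop, μ n K < ν K + ENNReal.ofReal ε :=
      eventually_lt_of_limsup_lt (lt_of_le_of_lt hlimsup hlt)
    refine le_liminf_of_le (by isBoundedDefault) ?_
    filter_upwards [hev] with n hn
    have hb := key_bound (μ n) w wInt hwK hc
    have hmul : (((W⁻¹ * ((1 - Real.log c) * W - ((μ n) K).toReal / c)) : ℝ) : EReal)
        ≤ ((W⁻¹ : ℝ) : EReal) *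
          extIntegral (entropyIntegrand ((μ n).rnDeriv volume) w) (volume.restrict K) := by
      rw [EReal.coe_mul]
      exact mul_le_mul_of_nonneg_left hb (by exact_mod_cast inv_nonneg.mpr hWpos.le)
    refine le_trans ?_ hmul
    rw [EReal.coe_le_coe_iff]
    have hn' : ((μ n) K).toReal ≤ (ν K).toReal + ε := by
      have := ENNReal.toReal_mono (by finiteness) hn.le
      rwa [ENNReal.toReal_add (measure_ne_top ν K) ENNReal.ofReal_ne_top,
        ENNReal.toReal_ofReal hε.le] at this
    have heq : W⁻¹ * ((1 - Real.log c) * W - ((μ n) K).toReal / c)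
        = (1 - Real.log c) - ((μ n) K).toReal / (c * W) := by
      field_simp
    rw [heq]
    gcongr
  -- conclude
  rcases eq_or_ne (ν K) 0 with hν0 | hν0
  · -- RHS is ⊤; show L = ⊤
    rw [hν0, ENNReal.div_zero (ENNReal.ofReal_pos.mpr hWpos).ne', ENNReal.log_top, ge_iff_le, top_le_iff]
    rw [EReal.eq_top_iff_forall_lt]
    intro y
    have := main (Real.exp (-(y + 1))) (Real.exp_pos _) (Real.exp (-(y + 1)) * W)
      (by positivity)
    rw [hν0] at this
    simp only [ENNReal.toReal_zero, zero_add] at this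
    have hsimp : 1 - Real.log (Real.exp (-(y + 1)))
        - Real.exp (-(y + 1)) * W / (Real.exp (-(y + 1)) * W) = y + 1 := by
      rw [Real.log_exp, div_self (by positivity)]
      ring
    rw [hsimp] at this
    exact lt_of_lt_of_le (by exact_mod_cast lt_add_one y) this
  · -- ν K positive and finite
    set x : ℝ := (ν K).toReal with hx_def
    have hxpos : 0 < x := ENNReal.toReal_pos hν0 (measure_ne_top ν K)
    have hRHS : ENNReal.log (ENNReal.ofReal W / ν K) = ((Real.log (W / x) : ℝ) : EReal) := by
      have hne0 : ENNReal.ofReal W / ν K ≠ 0 := by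
        simp [ENNReal.div_eq_zero_iff, ENNReal.ofReal_eq_zero, not_le.mpr hWpos,
          measure_ne_top ν K]
      have hneT : ENNReal.ofReal W / ν K ≠ ⊤ := by
        simp [ENNReal.div_eq_top, hν0, ENNReal.ofReal_ne_top]
      rw [ENNReal.log_pos_real hne0 hneT, ENNReal.toReal_div,
        ENNReal.toReal_ofReal hWpos.le]
    rw [ge_iff_le, hRHS]
    refine ereal_le_of_forall_sub_le fun δ hδ => ?_
    have := main (x / W) (by positivity) (δ * x) (by positivity)
    have hsimp : 1 - Real.log (x / W) - (x + δ * x) / (x / W * W)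
        = Real.log (W / x) - δ := by
      have h1 : x / W * W = x := by field_simp
      rw [h1]
      have h2 : (x + δ * x) / x = 1 + δ := by field_simp
      rw [h2]
      rw [Real.log_div hWpos.ne' hxpos.ne', Real.log_div hxpos.ne' hWpos.ne']
      ring
    rwa [hsimp] at this

end
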